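/- Let R be a commutative ring and let D{3}_2 = {(d_1,d_2,d_3) ∈ R^3 : d_i d_j d_k = 0 for all i,j,k and d_i^2·anything of total degree 3 vanishes, i.e., all products of three coordinates (with repetition) vanish}. Then the three inclusions i_{12}, i_{13}, i_{23} : D^2 → D{3}_2 (placing (d_1,d_2) in the indicated pair of slots and 0 elsewhere) are jointly surjective onto D{3}_2 in the following weak sense: an R-algebra homomorphism out of the Weil algebra W_{D{3}_2} is determined by its composites with the three maps W_{i_{jk}} : W_{D{3}_2} → W_{D^2}; equivalently, the three algebra maps W_{i_{jk}} are jointly injective. -/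

import Mathlib

set_option synthInstance.maxHeartbeats 1000000
set_option maxHeartbeats 1000000

open Finset

/-- The ideal of `R[X₁,X₂,X₃]` generated by the squares `Xᵢ²` together with all
monomials of degree `3` (indices with repetition). -/
noncomputable abbrev d32Ideal (R : Type*) [CommRing R] : Ideal (MvPolynomial (Fin 3) R) :=
  Ideal.span ((Set.range fun i : Fin 3 => (MvPolynomial.X i : MvPolynomial (Fin 3) R) ^ 2) ∪
    {p | ∃ f : Fin 3 → Fin 3, p = ∏ k, MvPolynomial.X (f k)})

/-- The Weil algebra `W_{D{3}₂}`. -/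
abbrev WeilD32 (R : Type*) [CommRing R] : Type _ :=
  MvPolynomial (Fin 3) R ⧸ d32Ideal R

/-- The ideal `(X², Y²)` of `R[X,Y]`. -/
noncomputable abbrev sq2Ideal (R : Type*) [CommRing R] : Ideal (MvPolynomial (Fin 2) R) :=
  Ideal.span (Set.range fun i : Fin 2 => (MvPolynomial.X i : MvPolynomial (Fin 2) R) ^ 2)

/-- The Weil algebra `W_{D²} = R[X,Y]/(X²,Y²)`. -/
abbrev WeilD2 (R : Type*) [CommRing R] : Type _ :=
  MvPolynomial (Fin 2) R ⧸ sq2Ideal R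

/-- `p` is the algebra map `W_{i_{jk}} : W_{D{3}₂} → W_{D²}` dual to the inclusion
`i_{jk} : D² → D{3}₂` placing the two coordinates in slots `j < k` and `0` elsewhere:
it sends `X_j ↦ X`, `X_k ↦ Y`, and the remaining variable to `0`. -/
def IsProjPair {R : Type*} [CommRing R] (j k : Fin 3)
    (p : WeilD32 R →ₐ[R] WeilD2 R) : Prop :=
  p (Ideal.Quotient.mk (d32Ideal R) (MvPolynomial.X j)) =
      Ideal.Quotient.mk (sq2Ideal R) (MvPolynomial.X 0) ∧
    p (Ideal.Quotient.mk (d32Ideal R) (MvPolynomial.X k)) =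
      Ideal.Quotient.mk (sq2Ideal R) (MvPolynomial.X 1) ∧
    ∀ l : Fin 3, l ≠ j → l ≠ k → p (Ideal.Quotient.mk (d32Ideal R) (MvPolynomial.X l)) = 0

namespace WeilAux

open MvPolynomial

variable {R : Type*} [CommRing R]

/-- squarefree unit vectors -/
noncomputable def e (i : Fin 3) : Fin 3 →₀ ℕ := Finsupp.single i 1

lemma fin3_ext_iff {m n : Fin 3 →₀ ℕ} : m = n ↔ m 0 = n 0 ∧ m 1 = n 1 ∧ m 2 = n 2 := by
  constructor
  · rintro rfl; exact ⟨rfl, rfl, rfl⟩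
  · rintro ⟨h0, h1, h2⟩
    ext i; fin_cases i <;> assumption

lemma sq2_mem_iff {q : MvPolynomial (Fin 2) R} :
    q ∈ sq2Ideal R ↔ ∀ m ∈ q.support, ∃ i : Fin 2, 2 ≤ m i := by
  have hs : (Set.range fun i : Fin 2 => (X i : MvPolynomial (Fin 2) R) ^ 2)
      = (fun s => monomial s (1 : R)) '' (Set.range fun i : Fin 2 => Finsupp.single i 2) := by
    rw [← Set.range_comp]
    exact congrArg Set.range (funext fun i => by simp [Function.comp, X_pow_eq_monomial])
  rw [sq2Ideal, hs, mem_ideal_span_monomial_image]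
  refine forall₂_congr fun m hm => ?_
  constructor
  · rintro ⟨si, ⟨i, rfl⟩, hle⟩
    exact ⟨i, by simpa using Finsupp.single_le_iff.mp hle⟩
  · rintro ⟨i, hi⟩
    exact ⟨Finsupp.single i 2, ⟨i, rfl⟩, Finsupp.single_le_iff.mpr hi⟩

lemma d32_mem_iff {q : MvPolynomial (Fin 3) R} :
    q ∈ d32Ideal R ↔ ∀ m ∈ q.support,
      (∃ i : Fin 3, 2 ≤ m i) ∨ (∃ f : Fin 3 → Fin 3, (∑ k, Finsupp.single (f k) 1) ≤ m) := by
  have hs : ((Set.range fun i : Fin 3 => (X i : MvPolynomial (Fin 3) R) ^ 2) ∪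
      {p | ∃ f : Fin 3 → Fin 3, p = ∏ k, X (f k)})
      = (fun s => monomial s (1 : R)) ''
        ((Set.range fun i : Fin 3 => Finsupp.single i 2) ∪
          {s | ∃ f : Fin 3 → Fin 3, s = ∑ k, Finsupp.single (f k) 1}) := by
    rw [Set.image_union]
    congr 1
    · rw [← Set.range_comp]
      exact congrArg Set.range (funext fun i => by simp [Function.comp, X_pow_eq_monomial])
    · ext p
      constructor
      · rintro ⟨f, rfl⟩
        refine ⟨∑ k, Finsupp.single (f k) 1, ⟨f, rfl⟩, ?_⟩
        show monomial (∑ k, Finsupp.single (f k) 1) (1 : R) = _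
        rw [monomial_sum_one]
        exact Finset.prod_congr rfl fun k _ => by rw [X]
      · rintro ⟨s, ⟨f, rfl⟩, rfl⟩
        refine ⟨f, ?_⟩
        show monomial (∑ k, Finsupp.single (f k) 1) (1 : R) = _
        rw [monomial_sum_one]
        exact Finset.prod_congr rfl fun k _ => by rw [X]
  rw [d32Ideal, hs, mem_ideal_span_monomial_image]
  refine forall₂_congr fun m hm => ?_
  constructor
  · rintro ⟨si, hsi | hsi, hle⟩
    · obtain ⟨i, rfl⟩ := hsi
      exact Or.inl ⟨i, by simpa using Finsupp.single_le_iff.mp hle⟩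
    · obtain ⟨f, rfl⟩ := hsi
      exact Or.inr ⟨f, hle⟩
  · rintro (⟨i, hi⟩ | ⟨f, hf⟩)
    · exact ⟨Finsupp.single i 2, Or.inl ⟨i, rfl⟩, Finsupp.single_le_iff.mpr hi⟩
    · exact ⟨∑ k, Finsupp.single (f k) 1, Or.inr ⟨f, rfl⟩, hf⟩

/-- If a multidegree on `Fin 3` fails the ideal criterion, it is one of the seven
squarefree multidegrees of degree ≤ 2. -/
lemma key (m : Fin 3 →₀ ℕ)
    (h : ¬ ((∃ i : Fin 3, 2 ≤ m i) ∨
      (∃ f : Fin 3 → Fin 3, (∑ k, Finsupp.single (f k) 1) ≤ m))) :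
    m = 0 ∨ m = e 0 ∨ m = e 1 ∨ m = e 2 ∨
      m = e 0 + e 1 ∨ m = e 0 + e 2 ∨ m = e 1 + e 2 := by
  push_neg at h
  obtain ⟨h1, h2⟩ := h
  have hle : ∀ i, m i ≤ 1 := fun i => by
    have := h1 i; omega
  have hid := h2 id
  simp only [id] at hid
  rw [Finsupp.le_iff] at hid
  push_neg at hid
  obtain ⟨i0, -, hi0⟩ := hid
  have hsum : ((∑ k : Fin 3, Finsupp.single (k : Fin 3) 1) : Fin 3 →₀ ℕ) i0 = 1 := by
    rw [Finsupp.finset_sum_apply]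
    fin_cases i0 <;> simp [Finsupp.single_apply]
  rw [hsum] at hi0
  have hi0' : m i0 = 0 := by omega
  have h0 := hle 0; have h1' := hle 1; have h2' := hle 2
  -- enumerate
  have : (m 0 = 0 ∨ m 0 = 1) ∧ (m 1 = 0 ∨ m 1 = 1) ∧ (m 2 = 0 ∨ m 2 = 1) := by omega
  have hnot : ¬ (m 0 = 1 ∧ m 1 = 1 ∧ m 2 = 1) := by
    rintro ⟨a, b, c⟩
    have h1 : m i0 = 1 := by fin_cases i0 <;> assumption
    omega
  obtain ⟨ha | ha, hb | hb, hc | hc⟩ := this <;>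
    simp only [fin3_ext_iff, e, Finsupp.coe_zero, Pi.zero_apply, Finsupp.add_apply,
      Finsupp.single_apply] <;> simp_all <;> tauto
  -- the (1,1,1) case contradicts hnot

lemma fin2_ext_iff {m n : Fin 2 →₀ ℕ} : m = n ↔ m 0 = n 0 ∧ m 1 = n 1 := by
  constructor
  · rintro rfl; exact ⟨rfl, rfl⟩
  · rintro ⟨h0, h1⟩
    ext i; fin_cases i <;> assumption

lemma sq2_coeff_eq_zero {A : MvPolynomial (Fin 2) R} (hA : A ∈ sq2Ideal R)
    (m : Fin 2 →₀ ℕ) (hm : ∀ i, m i ≤ 1) : coeff m A = 0 := by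
  by_contra h
  obtain ⟨i, hi⟩ := sq2_mem_iff.mp hA m (mem_support_iff.mpr h)
  have := hm i; omega

/-- The substitution `X j ↦ X 0`, `X k ↦ X 1`, other ↦ `0`. -/
noncomputable def subst3 (j k : Fin 3) : Fin 3 → MvPolynomial (Fin 2) R :=
  fun l => if l = j then X 0 else if l = k then X 1 else 0

lemma proj_apply {j k : Fin 3} (hjk : j ≠ k) {p : WeilD32 R →ₐ[R] WeilD2 R}
    (h : IsProjPair j k p) (P : MvPolynomial (Fin 3) R) :
    p (Ideal.Quotient.mk (d32Ideal R) P) =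
      Ideal.Quotient.mk (sq2Ideal R) (aeval (subst3 (R := R) j k) P) := by
  have h1 : p.comp (Ideal.Quotient.mkₐ R (d32Ideal R)) =
      aeval (fun i => p (Ideal.Quotient.mk (d32Ideal R) (X i))) := by
    conv_lhs => rw [aeval_unique (p.comp (Ideal.Quotient.mkₐ R (d32Ideal R)))]
    rfl
  have h2 : (Ideal.Quotient.mkₐ R (sq2Ideal R)).comp
        (aeval (subst3 (R := R) j k) : MvPolynomial (Fin 3) R →ₐ[R] MvPolynomial (Fin 2) R) =
      aeval (fun i => Ideal.Quotient.mkₐ R (sq2Ideal R) (subst3 (R := R) j k i)) :=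
    comp_aeval _ _
  have hv : (fun i => p (Ideal.Quotient.mk (d32Ideal R) (X i))) =
      fun i => Ideal.Quotient.mkₐ R (sq2Ideal R) (subst3 (R := R) j k i) := by
    funext i
    by_cases hij : i = j
    · subst hij; simpa [subst3] using h.1
    · by_cases hik : i = k
      · subst hik; simpa [subst3, Ne.symm hjk] using h.2.1
      · simpa [subst3, hij, hik] using h.2.2 i hij hik
  have : p (Ideal.Quotient.mk (d32Ideal R) P)
      = (p.comp (Ideal.Quotient.mkₐ R (d32Ideal R))) P := rfl
  rw [this, h1, hv, ← h2]
  rfl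

lemma aeval_mono0 (f : Fin 3 → MvPolynomial (Fin 2) R) (c : R) :
    aeval f (monomial 0 c) = C c := by
  rw [aeval_monomial]
  simp [algebraMap_eq]

lemma aeval_mono1 (f : Fin 3 → MvPolynomial (Fin 2) R) (i : Fin 3) (c : R) :
    aeval f (monomial (e i) c) = C c * f i := by
  rw [e, aeval_monomial, Finsupp.prod_single_index (by simp), pow_one, algebraMap_eq]

lemma aeval_mono2 (f : Fin 3 → MvPolynomial (Fin 2) R) (i j : Fin 3) (c : R) :
    aeval f (monomial (e i + e j) c) = C c * (f i * f j) := by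
  rw [e, e, aeval_monomial, Finsupp.prod_add_index' (by simp) (fun a b c => pow_add _ _ _),
    Finsupp.prod_single_index (by simp), Finsupp.prod_single_index (by simp), pow_one, pow_one,
    algebraMap_eq]

lemma main {R : Type*} [CommRing R]
    (p₁₂ p₁₃ p₂₃ : WeilD32 R →ₐ[R] WeilD2 R)
    (h₁₂ : IsProjPair 0 1 p₁₂) (h₁₃ : IsProjPair 0 2 p₁₃) (h₂₃ : IsProjPair 1 2 p₂₃) :
    ∀ a b : WeilD32 R, p₁₂ a = p₁₂ b → p₁₃ a = p₁₃ b → p₂₃ a = p₂₃ b → a = b := by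
  classical
  intro a b hab12 hab13 hab23
  obtain ⟨P, hP⟩ := Ideal.Quotient.mk_surjective (a - b)
  set c0 := coeff 0 P with hc0
  set c1 := coeff (e 0) P with hc1
  set c2 := coeff (e 1) P with hc2
  set c3 := coeff (e 2) P with hc3
  set c12 := coeff (e 0 + e 1) P with hc12
  set c13 := coeff (e 0 + e 2) P with hc13
  set c23 := coeff (e 1 + e 2) P with hc23
  set Q : MvPolynomial (Fin 3) R :=
    monomial 0 c0 + monomial (e 0) c1 + monomial (e 1) c2 + monomial (e 2) c3 +
      monomial (e 0 + e 1) c12 + monomial (e 0 + e 2) c13 + monomial (e 1 + e 2) c23 with hQ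
  -- coefficients of Q agree with those of P on the seven multidegrees
  have hq0 : coeff 0 Q = c0 := by
    simp [hQ, coeff_monomial, fin3_ext_iff, e, Finsupp.single_apply, Finsupp.add_apply]
  have hq1 : coeff (e 0) Q = c1 := by
    simp [hQ, coeff_monomial, fin3_ext_iff, e, Finsupp.single_apply, Finsupp.add_apply]
  have hq2 : coeff (e 1) Q = c2 := by
    simp [hQ, coeff_monomial, fin3_ext_iff, e, Finsupp.single_apply, Finsupp.add_apply]
  have hq3 : coeff (e 2) Q = c3 := by
    simp [hQ, coeff_monomial, fin3_ext_iff, e, Finsupp.single_apply, Finsupp.add_apply]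
  have hq12 : coeff (e 0 + e 1) Q = c12 := by
    simp [hQ, coeff_monomial, fin3_ext_iff, e, Finsupp.single_apply, Finsupp.add_apply]
  have hq13 : coeff (e 0 + e 2) Q = c13 := by
    simp [hQ, coeff_monomial, fin3_ext_iff, e, Finsupp.single_apply, Finsupp.add_apply]
  have hq23 : coeff (e 1 + e 2) Q = c23 := by
    simp [hQ, coeff_monomial, fin3_ext_iff, e, Finsupp.single_apply, Finsupp.add_apply]
  have hPQ : Ideal.Quotient.mk (d32Ideal R) P = Ideal.Quotient.mk (d32Ideal R) Q := by
    rw [Ideal.Quotient.eq, d32_mem_iff]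
    intro m hm
    by_contra hcrit
    rw [mem_support_iff] at hm
    rcases key m hcrit with rfl | rfl | rfl | rfl | rfl | rfl | rfl <;>
      simp only [coeff_sub] at hm
    · rw [hq0] at hm; simp [hc0] at hm
    · rw [hq1] at hm; simp [hc1] at hm
    · rw [hq2] at hm; simp [hc2] at hm
    · rw [hq3] at hm; simp [hc3] at hm
    · rw [hq12] at hm; simp [hc12] at hm
    · rw [hq13] at hm; simp [hc13] at hm
    · rw [hq23] at hm; simp [hc23] at hm
  -- images of Q under the three substitutions lie in sq2Ideal
  have himg : ∀ (j k : Fin 3) (p : WeilD32 R →ₐ[R] WeilD2 R), j ≠ k → IsProjPair j k p →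
      p a = p b → aeval (subst3 (R := R) j k) Q ∈ sq2Ideal R := by
    intro j k p hjk h hab
    rw [← Ideal.Quotient.eq_zero_iff_mem, ← proj_apply hjk h, ← hPQ, hP, map_sub, hab, sub_self]
  have h12 := himg 0 1 p₁₂ (by decide) h₁₂ hab12
  have h13 := himg 0 2 p₁₃ (by decide) h₁₃ hab13
  have h23 := himg 1 2 p₂₃ (by decide) h₂₃ hab23
  rw [hQ] at h12 h13 h23
  simp only [map_add, aeval_mono0, aeval_mono1, aeval_mono2, subst3] at h12 h13 h23
  norm_num [Fin.ext_iff] at h12 h13 h23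
  -- extract coefficients
  have e0 : (Finsupp.single (0 : Fin 2) 1 : Fin 2 →₀ ℕ) = Finsupp.single 0 1 := rfl
  have key2 : ∀ A ∈ sq2Ideal R, ∀ m : Fin 2 →₀ ℕ, (∀ i, m i ≤ 1) → coeff m A = 0 :=
    fun A hA m hm => sq2_coeff_eq_zero hA m hm
  have hC : ∀ (x y z w : R),
      (C x + C y * X 0 + C z * X 1 + C w * (X 0 * X 1) : MvPolynomial (Fin 2) R) ∈ sq2Ideal R →
      x = 0 ∧ y = 0 ∧ z = 0 ∧ w = 0 := by
    intro x y z w hA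
    have hx := key2 _ hA 0 (by intro i; simp)
    have hy := key2 _ hA (Finsupp.single 0 1) (by
      intro i; fin_cases i <;> simp [Finsupp.single_apply])
    have hz := key2 _ hA (Finsupp.single 1 1) (by
      intro i; fin_cases i <;> simp [Finsupp.single_apply])
    have hw := key2 _ hA (Finsupp.single 0 1 + Finsupp.single 1 1) (by
      intro i; fin_cases i <;> simp [Finsupp.add_apply, Finsupp.single_apply])
    simp only [C_apply, X, monomial_mul, mul_one, one_mul, zero_add, coeff_add,
      coeff_monomial, fin2_ext_iff, Finsupp.add_apply, Finsupp.single_apply,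
      Finsupp.coe_zero, Pi.zero_apply] at hx hy hz hw
    norm_num at hx hy hz hw
    exact ⟨hx, hy, hz, hw⟩
  obtain ⟨hz0, hz1, hz2, hz12⟩ := hC _ _ _ _ h12
  obtain ⟨-, -, hz3, hz13⟩ := hC _ _ _ _ h13
  obtain ⟨-, -, -, hz23⟩ := hC _ _ _ _ h23
  have hQ0 : Q = 0 := by
    rw [hQ, hz0, hz1, hz2, hz3, hz12, hz13, hz23]
    simp
  have : a - b = 0 := by rw [← hP, hPQ, hQ0, map_zero]
  exact sub_eq_zero.mp this


end WeilAux

/-- The three algebra maps `W_{i₁₂}, W_{i₁₃}, W_{i₂₃} : W_{D{3}₂} → W_{D²}` are jointly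
injective: an `R`-algebra homomorphism out of `W_{D{3}₂}` is determined by its
composites with them (the algebraic content of the standard quasi-colimit
representation of `D{3}₂`). -/
theorem weilD32_jointly_injective {R : Type*} [CommRing R]
    (p₁₂ p₁₃ p₂₃ : WeilD32 R →ₐ[R] WeilD2 R)
    (h₁₂ : IsProjPair 0 1 p₁₂) (h₁₃ : IsProjPair 0 2 p₁₃) (h₂₃ : IsProjPair 1 2 p₂₃) :
    ∀ a b : WeilD32 R, p₁₂ a = p₁₂ b → p₁₃ a = p₁₃ b → p₂₃ a = p₂₃ b → a = b := by
  exact WeilAux.main p₁₂ p₁₃ p₂₃ h₁₂ h₁₃ h₂₃
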